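/- (Clausius' theorem) Let Γ be a finite nonempty index set, let n ≥ 1, and for each i ∈ {1,…,n} let p_i, π_i : Γ → ℝ be strictly positive probability vectors. Define the heat flow per temperature from the system to the bath over the cycle as ΔS = −∑_{i=1}^{n} J[p_i, π_i]. Then ΔS ≤ 0, with equality if and only if p_i = π_i for every i. -/
import Mathlib


open BigOperators

/-- The Jeffreys divergence on a finite index set. -/
noncomputable def J {Γ : Type*} [Fintype Γ] (x y : Γ → ℝ) : ℝ :=
  ∑ i, (x i - y i) * Real.log (x i / y i)

/-- Clausius' theorem: for strictly positive probability
vectors p_i, π_i (i = 1,…,n, n ≥ 1) on a finite nonempty set Γ, the heat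
flow per temperature ΔS = −∑_{i=1}^{n} J[p_i, π_i] satisfies ΔS ≤ 0, with
equality iff p_i = π_i for every i. -/
theorem clausius {Γ : Type*} [Fintype Γ] [Nonempty Γ]
    (n : ℕ) (hn : 1 ≤ n) (p π : Fin n → Γ → ℝ)
    (hp : ∀ i x, 0 < p i x) (hp1 : ∀ i, ∑ x, p i x = 1)
    (hπ : ∀ i x, 0 < π i x) (hπ1 : ∀ i, ∑ x, π i x = 1) :
    -(∑ i, J (p i) (π i)) ≤ 0 ∧
    (-(∑ i, J (p i) (π i)) = 0 ↔ ∀ i, p i = π i) := by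
  have key : ∀ a b : ℝ, 0 < a → 0 < b →
      0 ≤ (a - b) * Real.log (a / b) ∧ ((a - b) * Real.log (a / b) = 0 ↔ a = b) := by
    intro a b ha hb
    rcases lt_trichotomy a b with h | h | h
    · have hlog : Real.log (a / b) < 0 :=
        Real.log_neg (div_pos ha hb) ((div_lt_one hb).2 h)
      constructor
      · exact mul_nonneg_of_nonpos_of_nonpos (by linarith) hlog.le
      · constructor
        · intro hz
          rcases mul_eq_zero.1 hz with h1 | h1 <;> [linarith; linarith]
        · intro hz; linarith
    · simp [h]
    · have hlog : 0 < Real.log (a / b) :=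
        Real.log_pos ((one_lt_div hb).2 h)
      constructor
      · exact mul_nonneg (by linarith) hlog.le
      · constructor
        · intro hz
          rcases mul_eq_zero.1 hz with h1 | h1 <;> [linarith; linarith]
        · intro hz; linarith
  have hJnn : ∀ i, 0 ≤ J (p i) (π i) := fun i =>
    Finset.sum_nonneg fun x _ => (key _ _ (hp i x) (hπ i x)).1
  have hsum : 0 ≤ ∑ i, J (p i) (π i) :=
    Finset.sum_nonneg fun i _ => hJnn i
  refine ⟨by linarith, ?_⟩
  rw [neg_eq_zero]
  rw [Finset.sum_eq_zero_iff_of_nonneg fun i _ => hJnn i]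
  constructor
  · intro h i
    have := h i (Finset.mem_univ i)
    rw [J, Finset.sum_eq_zero_iff_of_nonneg
      (fun x _ => (key _ _ (hp i x) (hπ i x)).1)] at this
    funext x
    exact (key _ _ (hp i x) (hπ i x)).2.1 (this x (Finset.mem_univ x))
  · intro h i _
    rw [J]
    apply Finset.sum_eq_zero
    intro x _
    exact (key _ _ (hp i x) (hπ i x)).2.2 (by rw [h i])
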